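/- Suppose Φ̄ ∈ C¹(ℝᴷ) with global minimiser θ* satisfies (x − θ*)·∇Φ̄(x)/2 ≥ λ(Φ̄(x) − Φ̄(θ*) + α²‖x − θ*‖²/4) for some λ ∈ (0, 1/4] and α > 0. Let (q_t, p_t) solve q' = p, p' = −∇Φ̄(q) − α p. Define V(x, y) = Φ̄(x) − Φ̄(θ*) + (α²/4)(‖x − θ* + α⁻¹y‖² + ‖α⁻¹y‖² − λ‖x − θ*‖²). Then V(q_t, p_t) ≤ V(q₀, p₀) e^{−αλt} for all t ≥ 0. -/

import Mathlib

open RealInnerProductSpace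

lemma aux_inner {E : Type*} [NormedAddCommGroup E] [InnerProductSpace ℝ E]
    (α lam : ℝ) (hα : α ≠ 0) (Q P G : E) :
    ⟪G, P⟫ + α ^ 2 / 4 *
      ((⟪Q + α⁻¹ • P, P + α⁻¹ • (-G - α • P)⟫ + ⟪P + α⁻¹ • (-G - α • P), Q + α⁻¹ • P⟫)
        + (⟪α⁻¹ • P, α⁻¹ • (-G - α • P)⟫ + ⟪α⁻¹ • (-G - α • P), α⁻¹ • P⟫)
        - lam * (⟪Q, P⟫ + ⟪P, Q⟫))
    = -(α / 2) * ⟪Q, G⟫ - α / 2 * ‖P‖ ^ 2 - α ^ 2 * lam / 2 * ⟪Q, P⟫ := by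
  simp only [inner_add_left, inner_add_right, inner_sub_left, inner_sub_right,
    real_inner_smul_left, real_inner_smul_right, inner_neg_left, inner_neg_right,
    ← real_inner_self_eq_norm_sq]
  rw [real_inner_comm P Q, real_inner_comm G Q, real_inner_comm G P]
  field_simp
  ring

/-- Exponential decay of the Lyapunov function `V` along the underdamped gradient flow. -/
theorem stmt3 {K : ℕ} (Φ : EuclideanSpace ℝ (Fin K) → ℝ) (α lam : ℝ)
    (hα : 0 < α) (hlam : lam ∈ Set.Ioc (0 : ℝ) (1 / 4))
    (hC1 : ContDiff ℝ 1 Φ)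
    (θs : EuclideanSpace ℝ (Fin K)) (hmin : ∀ x, Φ θs ≤ Φ x)
    (hass : ∀ x, lam * (Φ x - Φ θs + α ^ 2 * ‖x - θs‖ ^ 2 / 4)
      ≤ ⟪x - θs, gradient Φ x⟫ / 2)
    (q p : ℝ → EuclideanSpace ℝ (Fin K))
    (hq : ∀ t, HasDerivAt q (p t) t)
    (hp : ∀ t, HasDerivAt p (-(gradient Φ (q t)) - α • p t) t)
    (V : EuclideanSpace ℝ (Fin K) → EuclideanSpace ℝ (Fin K) → ℝ)
    (hV : ∀ x y, V x y = Φ x - Φ θs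
      + α ^ 2 / 4 * (‖x - θs + α⁻¹ • y‖ ^ 2 + ‖α⁻¹ • y‖ ^ 2 - lam * ‖x - θs‖ ^ 2)) :
    ∀ t ≥ (0 : ℝ), V (q t) (p t) ≤ V (q 0) (p 0) * Real.exp (-(α * lam * t)) := by
  have hα' : α ≠ 0 := ne_of_gt hα
  have hgrad : ∀ s, HasDerivAt (fun t => Φ (q t)) ⟪gradient Φ (q s), p s⟫ s := by
    intro s
    have h1 : HasGradientAt Φ (gradient Φ (q s)) (q s) :=
      ((hC1.differentiable one_ne_zero) (q s)).hasGradientAt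
    have := h1.hasFDerivAt.comp_hasDerivAt s (hq s)
    exact this
  have key : ∀ s, HasDerivAt (fun t => V (q t) (p t))
      (⟪gradient Φ (q s), p s⟫ + α ^ 2 / 4 *
        ((⟪q s - θs + α⁻¹ • p s, p s + α⁻¹ • (-(gradient Φ (q s)) - α • p s)⟫
          + ⟪p s + α⁻¹ • (-(gradient Φ (q s)) - α • p s), q s - θs + α⁻¹ • p s⟫)
        + (⟪α⁻¹ • p s, α⁻¹ • (-(gradient Φ (q s)) - α • p s)⟫
          + ⟪α⁻¹ • (-(gradient Φ (q s)) - α • p s), α⁻¹ • p s⟫)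
        - lam * (⟪q s - θs, p s⟫ + ⟪p s, q s - θs⟫))) s := by
    intro s
    have hu1 : HasDerivAt (fun t => q t - θs + α⁻¹ • p t)
        (p s + α⁻¹ • (-(gradient Φ (q s)) - α • p s)) s :=
      (((hq s).sub_const θs).add ((hp s).const_smul α⁻¹))
    have hu2 : HasDerivAt (fun t => α⁻¹ • p t)
        (α⁻¹ • (-(gradient Φ (q s)) - α • p s)) s := (hp s).const_smul α⁻¹
    have hu3 : HasDerivAt (fun t => q t - θs) (p s) s := (hq s).sub_const θs
    have h1 := (hu1.inner ℝ hu1)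
    have h2 := (hu2.inner ℝ hu2)
    have h3 := (hu3.inner ℝ hu3)
    have := ((hgrad s).sub_const (Φ θs)).add
      ((((h1.add h2).sub (h3.const_mul lam)).const_mul (α ^ 2 / 4)))
    refine (this.congr_of_eventuallyEq ?_)
    filter_upwards with t
    simp only [hV, ← real_inner_self_eq_norm_sq, Pi.add_apply, Pi.sub_apply]
  have hbound : ∀ s, ⟪gradient Φ (q s), p s⟫ + α ^ 2 / 4 *
        ((⟪q s - θs + α⁻¹ • p s, p s + α⁻¹ • (-(gradient Φ (q s)) - α • p s)⟫
          + ⟪p s + α⁻¹ • (-(gradient Φ (q s)) - α • p s), q s - θs + α⁻¹ • p s⟫)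
        + (⟪α⁻¹ • p s, α⁻¹ • (-(gradient Φ (q s)) - α • p s)⟫
          + ⟪α⁻¹ • (-(gradient Φ (q s)) - α • p s), α⁻¹ • p s⟫)
        - lam * (⟪q s - θs, p s⟫ + ⟪p s, q s - θs⟫))
      ≤ -(α * lam) * V (q s) (p s) := by
    intro s
    have hass' := hass (q s)
    have e1 : ‖q s - θs + α⁻¹ • p s‖ ^ 2
        = ‖q s - θs‖ ^ 2 + 2 * (α⁻¹ * ⟪q s - θs, p s⟫) + α⁻¹ ^ 2 * ‖p s‖ ^ 2 := by
      rw [norm_add_sq_real, real_inner_smul_right, norm_smul, Real.norm_eq_abs, mul_pow, sq_abs]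
    have e2 : ‖α⁻¹ • p s‖ ^ 2 = α⁻¹ ^ 2 * ‖p s‖ ^ 2 := by
      rw [norm_smul, Real.norm_eq_abs, mul_pow, sq_abs]
    rw [aux_inner α lam hα' (q s - θs) (p s) (gradient Φ (q s)), hV, e1, e2]
    generalize hA : ⟪q s - θs, gradient Φ (q s)⟫ = A at hass' ⊢
    generalize hB : ⟪q s - θs, p s⟫ = B
    generalize hf : Φ (q s) - Φ θs = f at hass' ⊢
    generalize hNQ : ‖q s - θs‖ = NQ at hass' ⊢
    generalize hNP : ‖p s‖ = NP
    have hNQ0 : (0:ℝ) ≤ NQ ^ 2 := by positivity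
    have hNP0 : (0:ℝ) ≤ NP ^ 2 := by positivity
    rw [← sub_nonneg]
    have key3 : -(α * lam) * (f + α ^ 2 / 4 *
          (NQ ^ 2 + 2 * (α⁻¹ * B) + α⁻¹ ^ 2 * NP ^ 2 + α⁻¹ ^ 2 * NP ^ 2 - lam * NQ ^ 2))
        - (-(α / 2) * A - α / 2 * NP ^ 2 - α ^ 2 * lam / 2 * B)
        = α * (A / 2 - lam * (f + α ^ 2 * NQ ^ 2 / 4))
          + α ^ 3 * lam ^ 2 / 4 * NQ ^ 2 + α / 2 * (1 - lam) * NP ^ 2 := by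
      field_simp
      ring
    have t1 : 0 ≤ α * (A / 2 - lam * (f + α ^ 2 * NQ ^ 2 / 4)) :=
      mul_nonneg hα.le (by linarith)
    have t2 : 0 ≤ α ^ 3 * lam ^ 2 / 4 * NQ ^ 2 := by positivity
    have t3 : 0 ≤ α / 2 * (1 - lam) * NP ^ 2 := by
      have : lam ≤ 1 := le_trans hlam.2 (by norm_num)
      have h1 : (0:ℝ) ≤ α / 2 * (1 - lam) := by
        apply mul_nonneg (by positivity); linarith
      exact mul_nonneg h1 hNP0
    linarith [key3]
  -- Gronwall via monotonicity
  have hg : ∀ s, HasDerivAt (fun t => V (q t) (p t) * Real.exp (α * lam * t))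
      ((⟪gradient Φ (q s), p s⟫ + α ^ 2 / 4 *
        ((⟪q s - θs + α⁻¹ • p s, p s + α⁻¹ • (-(gradient Φ (q s)) - α • p s)⟫
          + ⟪p s + α⁻¹ • (-(gradient Φ (q s)) - α • p s), q s - θs + α⁻¹ • p s⟫)
        + (⟪α⁻¹ • p s, α⁻¹ • (-(gradient Φ (q s)) - α • p s)⟫
          + ⟪α⁻¹ • (-(gradient Φ (q s)) - α • p s), α⁻¹ • p s⟫)
        - lam * (⟪q s - θs, p s⟫ + ⟪p s, q s - θs⟫))) * Real.exp (α * lam * s)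
        + V (q s) (p s) * ((α * lam) * Real.exp (α * lam * s))) s := by
    intro s
    have he : HasDerivAt (fun t => Real.exp (α * lam * t)) ((α * lam) * Real.exp (α * lam * s)) s := by
      have := ((hasDerivAt_id s).const_mul (α * lam)).exp
      simpa [mul_comm] using this
    exact (key s).mul he
  have hmono : Antitone (fun t => V (q t) (p t) * Real.exp (α * lam * t)) := by
    apply antitone_of_deriv_nonpos
    · exact fun s => (hg s).differentiableAt
    · intro s
      rw [(hg s).deriv]
      have hb := hbound s
      have hexp : (0:ℝ) < Real.exp (α * lam * s) := Real.exp_pos _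
      nlinarith [mul_le_mul_of_nonneg_right hb hexp.le]
  intro t ht
  have hm := hmono ht
  simp only at hm
  have hexp : (0:ℝ) < Real.exp (α * lam * t) := Real.exp_pos _
  rw [Real.exp_neg]
  calc V (q t) (p t) = (V (q t) (p t) * Real.exp (α * lam * t)) / Real.exp (α * lam * t) := by
        field_simp
    _ ≤ (V (q 0) (p 0) * Real.exp (α * lam * 0)) / Real.exp (α * lam * t) :=
        div_le_div_of_nonneg_right hm hexp.le
    _ = V (q 0) (p 0) * (Real.exp (α * lam * t))⁻¹ := by
        simp [div_eq_mul_inv]
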